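/- With the same hypotheses as above (g(λ) = ∑_{k∈ℤ} T^{Qk} f(λT^{αk}), αp = Q, T > 1), for every positive integer N it holds that p∫₀^∞ ξ^{p−1} f(ξ) dξ ≤ N(T^{Q/N} − 1) · sup_{λ>0} λ^p g(λ). Consequently, letting N → ∞, p∫₀^∞ ξ^{p−1} f(ξ)dξ ≤ Q·log(T) · sup_{λ>0} λ^p g(λ). -/

import Mathlib

open MeasureTheory ENNReal Set Filter Topology

lemma lint_rpow (p : ℝ) (hp : 1 ≤ p) {a b : ℝ} (ha : 0 < a) (hab : a ≤ b) :
    ∫⁻ ξ in Ioc a b, ENNReal.ofReal (ξ ^ (p - 1)) = ENNReal.ofReal ((b ^ p - a ^ p) / p) := by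
  have hint : IntegrableOn (fun ξ : ℝ => ξ ^ (p - 1)) (Ioc a b) := by
    apply (ContinuousOn.integrableOn_compact isCompact_Icc ?_).mono_set Ioc_subset_Icc_self
    exact fun x _ => (Real.continuousAt_rpow_const x (p-1) (Or.inr (by linarith))).continuousWithinAt
  rw [← ofReal_integral_eq_lintegral_ofReal hint ?_]
  · congr 1
    rw [← intervalIntegral.integral_of_le hab, integral_rpow (Or.inl (by linarith))]
    ring_nf
  · filter_upwards [ae_restrict_mem measurableSet_Ioc] with x hx
    exact Real.rpow_nonneg (le_of_lt (lt_of_lt_of_le ha hx.1.le)) _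

lemma main_bound (T Q α p : ℝ) (hT : 1 < T) (hQ : 0 < Q) (hα : 0 < α)
    (hp : 1 ≤ p) (hαp : α * p = Q)
    (f g : ℝ → ℝ≥0∞)
    (hf : ∀ ⦃a b : ℝ⦄, 0 < a → a ≤ b → f b ≤ f a)
    (hfg : ∀ l : ℝ, 0 < l →
      g l = ∑' k : ℤ, ENNReal.ofReal (T ^ (Q * (k : ℝ))) * f (l * T ^ (α * (k : ℝ))))
    (N : ℕ) (hN : 0 < N) :
    ENNReal.ofReal p * ∫⁻ ξ in Ioi (0 : ℝ), ENNReal.ofReal (ξ ^ (p - 1)) * f ξ ≤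
      ENNReal.ofReal ((N : ℝ) * (T ^ (Q / (N : ℝ)) - 1)) *
        ⨆ l ∈ Ioi (0 : ℝ), ENNReal.ofReal (l ^ p) * g l := by
  haveI : NeZero N := ⟨hN.ne'⟩
  have hT0 : (0:ℝ) < T := lt_trans one_pos hT
  set C := ⨆ l ∈ Ioi (0 : ℝ), ENNReal.ofReal (l ^ p) * g l with hCdef
  set n : ℝ := (N : ℝ) with hndef
  have hn : (0:ℝ) < n := Nat.cast_pos.2 hN
  have hp0 : (0:ℝ) < p := lt_of_lt_of_le one_pos hp
  set c : ℝ := T ^ (α / n) with hcdef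
  have hc : 1 < c := by
    rw [hcdef]
    exact Real.one_lt_rpow_iff_of_pos hT0 |>.2 (Or.inl ⟨hT, div_pos hα hn⟩)
  have hczpow : ∀ m : ℤ, c ^ m = T ^ (α * m / n) := by
    intro m
    rw [← Real.rpow_intCast c m, hcdef, ← Real.rpow_mul hT0.le]
    ring_nf
  have hcp : ∀ m : ℤ, (c ^ m) ^ p = T ^ (Q * m / n) := by
    intro m
    rw [hczpow m, ← Real.rpow_mul hT0.le]
    congr 1
    rw [div_mul_eq_mul_div]
    congr 1
    linear_combination (m:ℝ) * hαp
  have hcont : Continuous fun x : ℝ => x ^ (p - 1) :=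
    continuous_iff_continuousAt.2 fun x => Real.continuousAt_rpow_const x _ (Or.inr (by linarith))
  have hmeas : Measurable fun x : ℝ => ENNReal.ofReal (x ^ (p - 1)) :=
    hcont.measurable.ennreal_ofReal
  have hcpos : ∀ m : ℤ, (0:ℝ) < c ^ m := fun m => zpow_pos (lt_trans one_pos hc) m
  -- Step A: split the integral
  have stepA : ∫⁻ ξ in Ioi (0 : ℝ), ENNReal.ofReal (ξ ^ (p - 1)) * f ξ ≤
      ∑' m : ℤ, ∫⁻ ξ in Ioc (c ^ m) (c ^ (m + 1)), ENNReal.ofReal (ξ ^ (p - 1)) * f ξ := by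
    refine le_trans (lintegral_mono_set ?_) (lintegral_iUnion_le _ _)
    intro x hx
    obtain ⟨m, hm⟩ := exists_mem_Ioc_zpow (mem_Ioi.1 hx) hc
    exact mem_iUnion.2 ⟨m, hm⟩
  -- Step B: bound each piece
  have stepB : ∀ m : ℤ, ∫⁻ ξ in Ioc (c ^ m) (c ^ (m + 1)), ENNReal.ofReal (ξ ^ (p - 1)) * f ξ ≤
      ENNReal.ofReal (((c ^ (m+1)) ^ p - (c ^ m) ^ p) / p) * f (c ^ m) := by
    intro m
    have hab : (c:ℝ) ^ m ≤ c ^ (m + 1) :=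
      zpow_le_zpow_right₀ hc.le (by omega)
    calc ∫⁻ ξ in Ioc (c ^ m) (c ^ (m + 1)), ENNReal.ofReal (ξ ^ (p - 1)) * f ξ
        ≤ ∫⁻ ξ in Ioc (c ^ m) (c ^ (m + 1)), ENNReal.ofReal (ξ ^ (p - 1)) * f (c ^ m) := by
          refine setLIntegral_mono (hmeas.mul_const _) ?_
          intro x hx
          exact mul_le_mul_right (hf (hcpos m) hx.1.le) _
      _ = (∫⁻ ξ in Ioc (c ^ m) (c ^ (m + 1)), ENNReal.ofReal (ξ ^ (p - 1))) * f (c ^ m) :=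
          lintegral_mul_const _ hmeas
      _ = ENNReal.ofReal (((c ^ (m+1)) ^ p - (c ^ m) ^ p) / p) * f (c ^ m) := by
          rw [lint_rpow p hp (hcpos m) hab]
  -- Step C: the reindexed sum bound
  have stepC : (∑' m : ℤ, ENNReal.ofReal (T ^ (Q * (m:ℝ) / n)) * f (T ^ (α * (m:ℝ) / n)))
      ≤ (N : ℝ≥0∞) * C := by
    rw [← Equiv.tsum_eq (Int.divModEquiv N).symm
      (fun m : ℤ => ENNReal.ofReal (T ^ (Q * (m:ℝ) / n)) * f (T ^ (α * (m:ℝ) / n)))]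
    have hterm : ∀ q : ℤ × Fin N,
        ENNReal.ofReal (T ^ (Q * (((Int.divModEquiv N).symm q : ℤ) : ℝ) / n)) *
          f (T ^ (α * (((Int.divModEquiv N).symm q : ℤ) : ℝ) / n))
        = ENNReal.ofReal (T ^ (Q * ((q.2 : ℕ) : ℝ) / n)) *
            (ENNReal.ofReal (T ^ (Q * ((q.1 : ℤ) : ℝ))) *
              f (T ^ (α * ((q.2 : ℕ) : ℝ) / n) * T ^ (α * ((q.1 : ℤ) : ℝ)))) := by
      rintro ⟨k, r⟩
      have hcast : (((Int.divModEquiv N).symm (k, r) : ℤ) : ℝ) = (k:ℝ) * n + (r:ℕ) := by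
        simp only [Int.divModEquiv_symm_apply, hndef]
        push_cast
        ring
      have e1 : Q * ((k:ℝ) * n + ((r:ℕ):ℝ)) / n = Q * ((r:ℕ):ℝ) / n + Q * (k:ℝ) := by
        field_simp; ring
      have e2 : α * ((k:ℝ) * n + ((r:ℕ):ℝ)) / n = α * ((r:ℕ):ℝ) / n + α * (k:ℝ) := by
        field_simp; ring
      simp only [hcast, e1, e2, Real.rpow_add hT0,
        ENNReal.ofReal_mul (Real.rpow_nonneg hT0.le _)]
      ring
    rw [tsum_congr hterm, ENNReal.tsum_prod', ENNReal.tsum_comm]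
    have hinner : ∀ r : Fin N, (∑' k : ℤ, ENNReal.ofReal (T ^ (Q * ((r:ℕ):ℝ) / n)) *
        (ENNReal.ofReal (T ^ (Q * (k:ℝ))) *
          f (T ^ (α * ((r:ℕ):ℝ) / n) * T ^ (α * (k:ℝ))))) ≤ C := by
      intro r
      rw [ENNReal.tsum_mul_left, ← hfg _ (Real.rpow_pos_of_pos hT0 _)]
      have hlp : (T ^ (α * ((r:ℕ):ℝ) / n)) ^ p = T ^ (Q * ((r:ℕ):ℝ) / n) := by
        rw [← Real.rpow_mul hT0.le]
        congr 1
        rw [div_mul_eq_mul_div]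
        congr 1
        linear_combination ((r:ℕ):ℝ) * hαp
      rw [← hlp, hCdef]
      exact le_iSup₂ (f := fun l (_ : l ∈ Ioi (0:ℝ)) => ENNReal.ofReal (l ^ p) * g l) _
        (mem_Ioi.2 (Real.rpow_pos_of_pos hT0 _))
    calc (∑' r : Fin N, _) ≤ ∑' _r : Fin N, C := ENNReal.tsum_le_tsum hinner
      _ = N * C := by simp [tsum_fintype, Finset.sum_const, nsmul_eq_mul]
  -- Assembly
  have hone_le : (1:ℝ) ≤ T ^ (Q / n) := by
    have := Real.rpow_le_rpow_of_exponent_le hT.le (div_nonneg hQ.le hn.le)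
    rwa [Real.rpow_zero] at this
  have hterm2 : ∀ m : ℤ,
      ENNReal.ofReal p * (ENNReal.ofReal (((c ^ (m+1)) ^ p - (c ^ m) ^ p) / p) * f (c ^ m))
      = ENNReal.ofReal (T ^ (Q / n) - 1) *
          (ENNReal.ofReal (T ^ (Q * (m:ℝ) / n)) * f (T ^ (α * (m:ℝ) / n))) := by
    intro m
    have hdiff : (c ^ (m+1)) ^ p - (c ^ m) ^ p = (T ^ (Q / n) - 1) * T ^ (Q * (m:ℝ) / n) := by
      rw [hcp (m+1), hcp m]
      have : Q * ((m:ℝ) + 1) / n = Q * (m:ℝ) / n + Q / n := by field_simp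
      push_cast
      rw [this, Real.rpow_add hT0]
      ring
    rw [← mul_assoc, ← ENNReal.ofReal_mul hp0.le, mul_div_cancel₀ _ hp0.ne', hdiff,
      ENNReal.ofReal_mul (by linarith), hczpow m, mul_assoc]
  calc ENNReal.ofReal p * ∫⁻ ξ in Ioi (0 : ℝ), ENNReal.ofReal (ξ ^ (p - 1)) * f ξ
      ≤ ENNReal.ofReal p *
        ∑' m : ℤ, ENNReal.ofReal (((c ^ (m+1)) ^ p - (c ^ m) ^ p) / p) * f (c ^ m) :=
        mul_le_mul_right (stepA.trans (ENNReal.tsum_le_tsum stepB)) _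
    _ = ∑' m : ℤ, ENNReal.ofReal p *
        (ENNReal.ofReal (((c ^ (m+1)) ^ p - (c ^ m) ^ p) / p) * f (c ^ m)) :=
        ENNReal.tsum_mul_left.symm
    _ = ENNReal.ofReal (T ^ (Q / n) - 1) *
        ∑' m : ℤ, ENNReal.ofReal (T ^ (Q * (m:ℝ) / n)) * f (T ^ (α * (m:ℝ) / n)) := by
        rw [← ENNReal.tsum_mul_left]
        exact tsum_congr hterm2
    _ ≤ ENNReal.ofReal (T ^ (Q / n) - 1) * ((N : ℝ≥0∞) * C) := mul_le_mul_right stepC _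
    _ = ENNReal.ofReal (n * (T ^ (Q / n) - 1)) * C := by
        rw [ENNReal.ofReal_mul hn.le, hndef, ENNReal.ofReal_natCast]
        ring


lemma lim_aux {a : ℝ} (ha : 0 < a) :
    Tendsto (fun N : ℕ => (N : ℝ) * (Real.exp (a / N) - 1)) atTop (𝓝 a) := by
  have hslope : Tendsto (slope Real.exp 0) (𝓝[≠] 0) (𝓝 1) :=
    hasDerivAt_iff_tendsto_slope.1 (by simpa using Real.hasDerivAt_exp 0)
  have h0 : Tendsto (fun N : ℕ => a / (N : ℝ)) atTop (𝓝[≠] 0) := by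
    refine tendsto_nhdsWithin_of_tendsto_nhds_of_eventually_within _
      (tendsto_const_div_atTop_nhds_zero_nat a) ?_
    filter_upwards [eventually_ge_atTop 1] with N hN
    have : (0:ℝ) < a / N := div_pos ha (by exact_mod_cast hN)
    exact this.ne'
  have h1 : Tendsto (fun N : ℕ => a * slope Real.exp 0 (a / N)) atTop (𝓝 a) := by
    simpa using (hslope.comp h0).const_mul a
  refine h1.congr' ?_
  filter_upwards [eventually_ge_atTop 1] with N hN
  have hN0 : (0:ℝ) < (N:ℝ) := by exact_mod_cast hN
  rw [slope_def_field]
  field_simp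
  rw [Real.exp_zero]
  rw [mul_zero, sub_zero, mul_div_cancel_left₀ _ ha.ne']

theorem stmt_2 (T Q α p : ℝ) (hT : 1 < T) (hQ : 0 < Q) (hα : 0 < α)
    (hp : 1 ≤ p) (hαp : α * p = Q)
    (f g : ℝ → ℝ≥0∞)
    (hf : ∀ ⦃a b : ℝ⦄, 0 < a → a ≤ b → f b ≤ f a)
    (hg : ∀ ⦃a b : ℝ⦄, 0 < a → a ≤ b → g b ≤ g a)
    (hfg : ∀ l : ℝ, 0 < l →
      g l = ∑' k : ℤ, ENNReal.ofReal (T ^ (Q * (k : ℝ))) * f (l * T ^ (α * (k : ℝ))))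
    (hfin : (⨆ l ∈ Ioi (0 : ℝ), ENNReal.ofReal (l ^ p) * g l) ≠ ⊤) :
    (∀ N : ℕ, 0 < N →
      ENNReal.ofReal p * ∫⁻ ξ in Ioi (0 : ℝ), ENNReal.ofReal (ξ ^ (p - 1)) * f ξ ≤
        ENNReal.ofReal ((N : ℝ) * (T ^ (Q / (N : ℝ)) - 1)) *
          ⨆ l ∈ Ioi (0 : ℝ), ENNReal.ofReal (l ^ p) * g l) ∧
    ENNReal.ofReal p * ∫⁻ ξ in Ioi (0 : ℝ), ENNReal.ofReal (ξ ^ (p - 1)) * f ξ ≤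
      ENNReal.ofReal (Q * Real.log T) * ⨆ l ∈ Ioi (0 : ℝ), ENNReal.ofReal (l ^ p) * g l := by
  have hT0 : (0:ℝ) < T := lt_trans one_pos hT
  set C := ⨆ l ∈ Ioi (0 : ℝ), ENNReal.ofReal (l ^ p) * g l with hC
  have key : ∀ N : ℕ, 0 < N →
      ENNReal.ofReal p * ∫⁻ ξ in Ioi (0 : ℝ), ENNReal.ofReal (ξ ^ (p - 1)) * f ξ ≤
        ENNReal.ofReal ((N : ℝ) * (T ^ (Q / (N : ℝ)) - 1)) * C :=
    fun N hN => main_bound T Q α p hT hQ hα hp hαp f g hf hfg N hN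
  refine ⟨key, ?_⟩
  have ha : 0 < Q * Real.log T := mul_pos hQ (Real.log_pos hT)
  have hrw : ∀ N : ℕ, (N:ℝ) * (T ^ (Q/(N:ℝ)) - 1)
      = (N:ℝ) * (Real.exp ((Q * Real.log T) / (N:ℝ)) - 1) := by
    intro N
    rw [Real.rpow_def_of_pos hT0]
    ring_nf
  have hlim : Tendsto (fun N : ℕ => ENNReal.ofReal ((N:ℝ) * (T ^ (Q/(N:ℝ)) - 1)) * C) atTop
      (𝓝 (ENNReal.ofReal (Q * Real.log T) * C)) := by
    refine ENNReal.Tendsto.mul_const ?_ (Or.inr hfin)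
    refine (ENNReal.continuous_ofReal.tendsto _).comp ?_
    refine (lim_aux ha).congr' ?_
    filter_upwards with N
    exact (hrw N).symm
  refine ge_of_tendsto hlim ?_
  filter_upwards [eventually_ge_atTop 1] with N hN
  exact key N hN
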